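/- For every matroid (U, I) with users as ground set elements, the corresponding winner-pays-bid matroid auction is (1 − 1/e, 1)-smooth with private deviations. -/

import Mathlib

open MeasureTheory

/-- A matroid as a finite set system: nonempty, downward closed, exchange. -/
structure FinMatroid (X : Type*) [DecidableEq X] [Fintype X] where
  Indep : Finset X → Prop
  nonempty : ∃ A, Indep A
  downward : ∀ ⦃A A' : Finset X⦄, Indep A' → A ⊆ A' → Indep A
  exchange : ∀ ⦃A A' : Finset X⦄, Indep A → Indep A' → A.card < A'.card →
    ∃ x ∈ A' \ A, Indep (insert x A)


open scoped NNReal ENNReal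

namespace SmoothAux

variable {U : Type*} [DecidableEq U] [Fintype U]

theorem indep_empty (M : FinMatroid U) : M.Indep ∅ := by
  obtain ⟨A, hA⟩ := M.nonempty
  exact M.downward hA (Finset.empty_subset A)

/-- spanning step: if `insert x B` is dependent but `insert x D` independent with `D ⊆ B`,
then some `j ∈ B \ D` can be swapped out for `x`. -/
theorem step (M : FinMatroid U) {B D : Finset U} {x : U}
    (hB : M.Indep B) (hxB : x ∉ B) (hdep : ¬ M.Indep (insert x B))
    (hD : M.Indep (insert x D)) (hDB : D ⊆ B) :
    ∃ j ∈ B, j ∉ D ∧ M.Indep (insert x (B.erase j)) := by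
  classical
  set 𝒦 : Finset (Finset U) :=
    Finset.univ.powerset.filter
      (fun K => M.Indep K ∧ insert x D ⊆ K ∧ K ⊆ insert x B) with h𝒦
  have hmem : ∀ K, K ∈ 𝒦 ↔ M.Indep K ∧ insert x D ⊆ K ∧ K ⊆ insert x B := by
    intro K
    simp [h𝒦, Finset.mem_filter, Finset.mem_powerset, Finset.subset_univ]
  have hne : 𝒦.Nonempty := ⟨insert x D, (hmem _).2 ⟨hD, le_refl _,
    Finset.insert_subset_insert x hDB⟩⟩
  obtain ⟨K, hK𝒦, hKmax⟩ := Finset.exists_max_image 𝒦 Finset.card hne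
  obtain ⟨hKind, hKsub1, hKsub2⟩ := (hmem K).1 hK𝒦
  -- |K| ≥ |B|
  have hcard_ge : B.card ≤ K.card := by
    by_contra h
    push_neg at h
    obtain ⟨y, hy, hyind⟩ := M.exchange hKind hB h
    rw [Finset.mem_sdiff] at hy
    have : insert y K ∈ 𝒦 := (hmem _).2 ⟨hyind,
      hKsub1.trans (Finset.subset_insert _ _),
      Finset.insert_subset (Finset.mem_insert_of_mem hy.1) hKsub2⟩
    have := hKmax _ this
    rw [Finset.card_insert_of_notMem hy.2] at this
    omega
  have hxK : x ∈ K := hKsub1 (Finset.mem_insert_self _ _)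
  have hKne : K ≠ insert x B := by
    rintro rfl; exact hdep hKind
  have hcard_le : K.card ≤ B.card := by
    have h1 : K.card ≤ (insert x B).card := Finset.card_le_card hKsub2
    have h2 : (insert x B).card = B.card + 1 := Finset.card_insert_of_notMem hxB
    rcases lt_or_eq_of_le h1 with h | h
    · omega
    · exact absurd (Finset.eq_of_subset_of_card_le hKsub2 (by omega)) hKne
  have hcard : K.card = B.card := le_antisymm hcard_le hcard_ge
  -- find j ∈ B \ K
  have hBK : ¬ B ⊆ K := by
    intro h
    have : insert x B ⊆ K := Finset.insert_subset hxK h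
    exact hKne (le_antisymm hKsub2 this)
  obtain ⟨j, hjB, hjK⟩ := Finset.not_subset.1 hBK
  have hjD : j ∉ D := fun h => hjK (hKsub1 (Finset.mem_insert_of_mem h))
  refine ⟨j, hjB, hjD, ?_⟩
  have hKeq : K = insert x (B.erase j) := by
    apply Finset.eq_of_subset_of_card_le
    · intro y hy
      rcases Finset.mem_insert.1 (hKsub2 hy) with rfl | hyB
      · exact Finset.mem_insert_self _ _
      · refine Finset.mem_insert_of_mem (Finset.mem_erase.2 ⟨?_, hyB⟩)
        rintro rfl; exact hjK hy
    · rw [Finset.card_insert_of_notMem (fun h => hxB (Finset.erase_subset _ _ h)),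
        Finset.card_erase_of_mem hjB, hcard]
      have : 0 < B.card := Finset.card_pos.2 ⟨j, hjB⟩
      omega
  rw [← hKeq]; exact hKind

end SmoothAux

namespace SmoothAux

open scoped Classical

variable {U : Type*} [DecidableEq U] [Fintype U]

theorem inj_exists (M : FinMatroid U) {A B : Finset U}
    (hA : M.Indep A) (hB : M.Indep B) :
    ∃ f : U → U,
      Set.InjOn f ↑(A.filter (fun i => i ∉ B ∧ ¬ M.Indep (insert i B))) ∧
      ∀ i ∈ A.filter (fun i => i ∉ B ∧ ¬ M.Indep (insert i B)),
        f i ∈ B ∧ f i ∉ A ∧ M.Indep (insert i (B.erase (f i))) := by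
  classical
  set Adep := A.filter (fun i => i ∉ B ∧ ¬ M.Indep (insert i B)) with hAdep
  set t : {x // x ∈ Adep} → Finset U :=
    fun i => (B \ A).filter (fun j => M.Indep (insert i.val (B.erase j))) with ht
  have hall : ∀ s : Finset {x // x ∈ Adep}, s.card ≤ (s.biUnion t).card := by
    intro s
    set S := s.image (fun i => i.val) with hS
    have hScard : S.card = s.card := Finset.card_image_of_injective _ Subtype.val_injective
    set N := s.biUnion t with hN
    have hSprop : ∀ x ∈ S, x ∈ A ∧ x ∉ B ∧ ¬ M.Indep (insert x B) := by
      intro x hx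
      obtain ⟨i, _, rfl⟩ := Finset.mem_image.1 hx
      have := Finset.mem_filter.1 i.property
      exact ⟨this.1, this.2.1, this.2.2⟩
    have hNsub : N ⊆ B \ A := by
      intro j hj
      obtain ⟨i, _, hji⟩ := Finset.mem_biUnion.1 hj
      exact (Finset.mem_filter.1 hji).1
    set D := (A ∩ B) ∪ N with hD
    have hDB : D ⊆ B := by
      intro j hj
      rcases Finset.mem_union.1 hj with h | h
      · exact (Finset.mem_inter.1 h).2
      · exact (Finset.mem_sdiff.1 (hNsub h)).1
    have hDind : M.Indep D := M.downward hB hDB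
    set I := (A ∩ B) ∪ S with hI
    have hIA : I ⊆ A := by
      intro x hx
      rcases Finset.mem_union.1 hx with h | h
      · exact (Finset.mem_inter.1 h).1
      · exact (hSprop x h).1
    have hIind : M.Indep I := M.downward hA hIA
    have key : I.card ≤ D.card := by
      by_contra h
      push_neg at h
      obtain ⟨x, hx, hxind⟩ := M.exchange hDind hIind h
      rw [Finset.mem_sdiff] at hx
      have hxS : x ∈ S := by
        rcases Finset.mem_union.1 hx.1 with h' | h'
        · exact absurd (Finset.mem_union_left _ h') hx.2
        · exact h'
      obtain ⟨hxA, hxB, hxdep⟩ := hSprop x hxS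
      obtain ⟨j, hjB, hjD, hjind⟩ := step M hB hxB hxdep hxind hDB
      have hjA : j ∉ A := by
        intro hjA
        exact hjD (Finset.mem_union_left _ (Finset.mem_inter.2 ⟨hjA, hjB⟩))
      obtain ⟨ix, hixs, hixval⟩ := Finset.mem_image.1 hxS
      have : j ∈ N := Finset.mem_biUnion.2 ⟨ix, hixs,
        Finset.mem_filter.2 ⟨Finset.mem_sdiff.2 ⟨hjB, hjA⟩, by rw [hixval]; exact hjind⟩⟩
      exact hjD (Finset.mem_union_right _ this)
    have hdisj1 : Disjoint (A ∩ B) S := by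
      rw [Finset.disjoint_right]
      intro x hx
      intro h
      exact (hSprop x hx).2.1 (Finset.mem_inter.1 h).2
    have hdisj2 : Disjoint (A ∩ B) N := by
      rw [Finset.disjoint_right]
      intro x hx h
      exact (Finset.mem_sdiff.1 (hNsub hx)).2 (Finset.mem_inter.1 h).1
    have hIcard : I.card = (A ∩ B).card + S.card := Finset.card_union_of_disjoint hdisj1
    have hDcard : D.card = (A ∩ B).card + N.card := Finset.card_union_of_disjoint hdisj2
    omega
  obtain ⟨f0, hf0inj, hf0mem⟩ := (Finset.all_card_le_biUnion_card_iff_exists_injective t).1 hall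
  refine ⟨fun i => if h : i ∈ Adep then f0 ⟨i, h⟩ else i, ?_, ?_⟩
  · intro i1 h1 i2 h2 heq
    rw [Finset.mem_coe] at h1 h2
    simp only [dif_pos h1, dif_pos h2] at heq
    have := hf0inj heq
    exact congrArg Subtype.val this
  · intro i hi
    simp only [dif_pos hi]
    have := hf0mem ⟨i, hi⟩
    rw [ht, Finset.mem_filter, Finset.mem_sdiff] at this
    exact ⟨this.1.1, this.1.2, this.2⟩

end SmoothAux

namespace SmoothAux

open scoped Classical

variable {U : Type*} [DecidableEq U] [Fintype U]

set_option linter.unusedSectionVars false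

noncomputable def maxOver (s : Finset (Finset U)) (f : Finset U → ℝ) : ℝ :=
  if h : s.Nonempty then s.sup' h f else 0

theorem le_maxOver {s : Finset (Finset U)} {f : Finset U → ℝ} {B : Finset U}
    (hB : B ∈ s) : f B ≤ maxOver s f := by
  rw [maxOver, dif_pos ⟨B, hB⟩]
  exact Finset.le_sup' f hB

theorem maxOver_le {s : Finset (Finset U)} {f : Finset U → ℝ} (h : s.Nonempty)
    {x : ℝ} (hx : ∀ B ∈ s, f B ≤ x) : maxOver s f ≤ x := by
  rw [maxOver, dif_pos h]
  exact Finset.sup'_le h f hx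

theorem exists_maxOver {s : Finset (Finset U)} {f : Finset U → ℝ} (h : s.Nonempty) :
    ∃ B ∈ s, maxOver s f = f B := by
  rw [maxOver, dif_pos h]
  obtain ⟨B, hB, hBe⟩ := Finset.exists_mem_eq_sup' h f
  exact ⟨B, hB, hBe⟩

noncomputable def Wm (M : FinMatroid U) (b : U → ℝ) (i : U) : ℝ :=
  maxOver (Finset.univ.powerset.filter (fun B => M.Indep B ∧ i ∉ B)) (fun B => ∑ j ∈ B, b j)

noncomputable def Cc (M : FinMatroid U) (b : U → ℝ) (i : U) : ℝ :=
  maxOver (Finset.univ.powerset.filter (fun B => M.Indep B ∧ i ∈ B))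
    (fun B => ∑ j ∈ B.erase i, b j)

noncomputable def thr (M : FinMatroid U) (b : U → ℝ) (i : U) : ℝ := Wm M b i - Cc M b i

theorem mem_Wm_set {M : FinMatroid U} {i : U} {B : Finset U} :
    B ∈ Finset.univ.powerset.filter (fun B => M.Indep B ∧ i ∉ B) ↔ M.Indep B ∧ i ∉ B := by
  simp [Finset.mem_filter, Finset.mem_powerset]

theorem mem_Cc_set {M : FinMatroid U} {i : U} {B : Finset U} :
    B ∈ Finset.univ.powerset.filter (fun B => M.Indep B ∧ i ∈ B) ↔ M.Indep B ∧ i ∈ B := by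
  simp [Finset.mem_filter, Finset.mem_powerset]

theorem Wm_ge {M : FinMatroid U} {b : U → ℝ} {i : U} {B : Finset U}
    (h1 : M.Indep B) (h2 : i ∉ B) : ∑ j ∈ B, b j ≤ Wm M b i := by
  rw [Wm]; exact le_maxOver (f := fun B => ∑ j ∈ B, b j) (mem_Wm_set.2 ⟨h1, h2⟩)

theorem Wm_le {M : FinMatroid U} {b : U → ℝ} {i : U} {x : ℝ}
    (hx : ∀ B, M.Indep B → i ∉ B → ∑ j ∈ B, b j ≤ x) : Wm M b i ≤ x := by
  rw [Wm]
  refine maxOver_le ⟨∅, mem_Wm_set.2 ⟨indep_empty M, Finset.notMem_empty i⟩⟩ ?_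
  intro B hB
  obtain ⟨h1, h2⟩ := mem_Wm_set.1 hB
  exact hx B h1 h2

theorem Cc_ge {M : FinMatroid U} {b : U → ℝ} {i : U} {B : Finset U}
    (h1 : M.Indep B) (h2 : i ∈ B) : ∑ j ∈ B.erase i, b j ≤ Cc M b i := by
  rw [Cc]; exact le_maxOver (f := fun B => ∑ j ∈ B.erase i, b j) (mem_Cc_set.2 ⟨h1, h2⟩)

theorem exists_Cc {M : FinMatroid U} {b : U → ℝ} {i : U}
    (h : ∃ B, M.Indep B ∧ i ∈ B) :
    ∃ B, M.Indep B ∧ i ∈ B ∧ Cc M b i = ∑ j ∈ B.erase i, b j := by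
  obtain ⟨B0, h0⟩ := h
  rw [Cc]
  obtain ⟨B, hB, hBe⟩ := exists_maxOver (f := fun B => ∑ j ∈ B.erase i, b j)
    ⟨B0, mem_Cc_set.2 h0⟩
  obtain ⟨h1, h2⟩ := mem_Cc_set.1 hB
  exact ⟨B, h1, h2, hBe⟩

theorem exists_Wm (M : FinMatroid U) (b : U → ℝ) (i : U) :
    ∃ B, M.Indep B ∧ i ∉ B ∧ Wm M b i = ∑ j ∈ B, b j := by
  rw [Wm]
  obtain ⟨B, hB, hBe⟩ := exists_maxOver (f := fun B => ∑ j ∈ B, b j)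
    ⟨∅, mem_Wm_set.2 ⟨indep_empty M, Finset.notMem_empty i⟩⟩
  obtain ⟨h1, h2⟩ := mem_Wm_set.1 hB
  exact ⟨B, h1, h2, hBe⟩

theorem sum_thr_le (M : FinMatroid U) (sel : (U → ℝ) → Finset U)
    (hsel_indep : ∀ b, M.Indep (sel b))
    (hsel_max : ∀ b : U → ℝ, ∀ B, M.Indep B → ∑ i ∈ B, b i ≤ ∑ i ∈ sel b, b i)
    (b : U → ℝ) (hb : ∀ i, 0 ≤ b i) {A : Finset U} (hA : M.Indep A) :
    ∑ i ∈ A, max (thr M b i) 0 ≤ ∑ j ∈ sel b, b j := by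
  classical
  set B := sel b with hBdef
  set W := ∑ j ∈ B, b j with hWdef
  have hBind : M.Indep B := hsel_indep b
  have hWm_le : ∀ i, Wm M b i ≤ W := fun i =>
    Wm_le (fun B' h1 _ => hsel_max b B' h1)
  obtain ⟨f, hinj, hf⟩ := inj_exists M hA hBind
  set Adep := A.filter (fun i => i ∉ B ∧ ¬ M.Indep (insert i B)) with hAdep
  set h : U → ℝ := fun i =>
    if i ∈ B then b i else if M.Indep (insert i B) then 0 else b (f i) with hh
  have hpoint : ∀ i ∈ A, max (thr M b i) 0 ≤ h i := by
    intro i hiA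
    by_cases hiB : i ∈ B
    · have h1 : W - b i ≤ Cc M b i := by
        have := Cc_ge (b := b) hBind hiB
        have h2 : b i + ∑ j ∈ B.erase i, b j = W := Finset.add_sum_erase B b hiB
        linarith
      have : thr M b i ≤ b i := by
        have := hWm_le i
        rw [thr]; linarith
      simp only [hh, if_pos hiB]
      exact max_le this (hb i)
    · by_cases hins : M.Indep (insert i B)
      · have h1 : W ≤ Cc M b i := by
          have := Cc_ge (b := b) hins (Finset.mem_insert_self i B)
          rwa [Finset.erase_insert hiB] at this
        have : thr M b i ≤ 0 := by
          have := hWm_le i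
          rw [thr]; linarith
        simp only [hh, if_neg hiB, if_pos hins]
        exact max_le this le_rfl
      · obtain ⟨hfB, hfA, hfind⟩ := hf i (Finset.mem_filter.2 ⟨hiA, hiB, hins⟩)
        have h1 : W - b (f i) ≤ Cc M b i := by
          have hii : i ∉ B.erase (f i) := fun h => hiB (Finset.erase_subset _ _ h)
          have := Cc_ge (b := b) hfind (Finset.mem_insert_self i (B.erase (f i)))
          rw [Finset.erase_insert hii] at this
          have h2 : b (f i) + ∑ j ∈ B.erase (f i), b j = W :=
            Finset.add_sum_erase B b hfB
          linarith
        have : thr M b i ≤ b (f i) := by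
          have := hWm_le i
          rw [thr]; linarith
        simp only [hh, if_neg hiB, if_neg hins]
        exact max_le this (hb (f i))
  refine le_trans (Finset.sum_le_sum hpoint) ?_
  have hsplit : ∑ i ∈ A, h i =
      ∑ i ∈ A.filter (fun i => i ∈ B), h i + ∑ i ∈ A.filter (fun i => i ∉ B), h i :=
    (Finset.sum_filter_add_sum_filter_not A _ h).symm
  have hsplit2 : ∑ i ∈ A.filter (fun i => i ∉ B), h i =
      ∑ i ∈ (A.filter (fun i => i ∉ B)).filter (fun i => M.Indep (insert i B)), h i +
      ∑ i ∈ (A.filter (fun i => i ∉ B)).filter (fun i => ¬ M.Indep (insert i B)), h i :=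
    (Finset.sum_filter_add_sum_filter_not _ _ h).symm
  have hval1 : ∑ i ∈ A.filter (fun i => i ∈ B), h i =
      ∑ i ∈ A.filter (fun i => i ∈ B), b i := by
    refine Finset.sum_congr rfl (fun i hi => ?_)
    have := (Finset.mem_filter.1 hi).2
    simp only [hh, if_pos this]
  have hval2 : ∑ i ∈ (A.filter (fun i => i ∉ B)).filter (fun i => M.Indep (insert i B)),
      h i = 0 := by
    refine Finset.sum_eq_zero (fun i hi => ?_)
    obtain ⟨hi1, hi2⟩ := Finset.mem_filter.1 hi
    have := (Finset.mem_filter.1 hi1).2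
    simp only [hh, if_neg this, if_pos hi2]
  have heqdep : (A.filter (fun i => i ∉ B)).filter (fun i => ¬ M.Indep (insert i B)) =
      Adep := by
    rw [hAdep, Finset.filter_filter]
  have hval3 : ∑ i ∈ (A.filter (fun i => i ∉ B)).filter (fun i => ¬ M.Indep (insert i B)),
      h i = ∑ i ∈ Adep, b (f i) := by
    rw [heqdep]
    refine Finset.sum_congr rfl (fun i hi => ?_)
    obtain ⟨hi1, hi2, hi3⟩ := Finset.mem_filter.1 hi
    simp only [hh, if_neg hi2, if_neg hi3]
  have himg : ∑ i ∈ Adep, b (f i) = ∑ j ∈ Adep.image f, b j := by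
    rw [Finset.sum_image]
    intro x hx y hy hxy
    exact hinj (Finset.mem_coe.2 hx) (Finset.mem_coe.2 hy) hxy
  have hsub : A.filter (fun i => i ∈ B) ∪ Adep.image f ⊆ B := by
    intro j hj
    rcases Finset.mem_union.1 hj with hj | hj
    · exact (Finset.mem_filter.1 hj).2
    · obtain ⟨i, hi, rfl⟩ := Finset.mem_image.1 hj
      exact (hf i hi).1
  have hdisj : Disjoint (A.filter (fun i => i ∈ B)) (Adep.image f) := by
    rw [Finset.disjoint_right]
    intro j hj hj'
    obtain ⟨i, hi, rfl⟩ := Finset.mem_image.1 hj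
    exact (hf i hi).2.1 (Finset.mem_filter.1 hj').1
  calc ∑ i ∈ A, h i
      = ∑ i ∈ A.filter (fun i => i ∈ B), b i + ∑ j ∈ Adep.image f, b j := by
        rw [hsplit, hsplit2, hval1, hval2, hval3, himg]; ring
    _ = ∑ j ∈ A.filter (fun i => i ∈ B) ∪ Adep.image f, b j :=
        (Finset.sum_union hdisj).symm
    _ ≤ W := Finset.sum_le_sum_of_subset_of_nonneg hsub (fun j _ _ => hb j)

end SmoothAux

namespace SmoothAux

variable {U : Type*} [DecidableEq U] [Fintype U]

theorem win_of_thr_lt (M : FinMatroid U) (sel : (U → ℝ) → Finset U)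
    (hsel_indep : ∀ b, M.Indep (sel b))
    (hsel_max : ∀ b : U → ℝ, ∀ B, M.Indep B → ∑ i ∈ B, b i ≤ ∑ i ∈ sel b, b i)
    (b : U → ℝ) (i : U) {z : ℝ}
    (hex : ∃ B, M.Indep B ∧ i ∈ B) (hz : thr M b i < z) :
    i ∈ sel (Function.update b i z) := by
  set b' := Function.update b i z with hb'
  obtain ⟨B0, hB0i, hB0m, hB0e⟩ := exists_Cc (b := b) hex
  by_contra hwin
  have h1 : ∑ j ∈ sel b', b' j ≤ Wm M b i := by
    have he : ∑ j ∈ sel b', b' j = ∑ j ∈ sel b', b j := by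
      refine Finset.sum_congr rfl (fun j hj => ?_)
      exact Function.update_of_ne (ne_of_mem_of_not_mem hj hwin) _ _
    rw [he]
    exact Wm_ge (hsel_indep b') hwin
  have h2 : ∑ j ∈ B0, b' j = z + ∑ j ∈ B0.erase i, b j := by
    rw [← Finset.add_sum_erase _ b' hB0m]
    congr 1
    · exact Function.update_self _ _ _
    · refine Finset.sum_congr rfl (fun j hj => ?_)
      exact Function.update_of_ne (Finset.ne_of_mem_erase hj) _ _
  have h3 := hsel_max b' B0 hB0i
  rw [thr] at hz
  rw [hB0e] at hz
  linarith
  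
theorem thr_le_of_win (M : FinMatroid U) (sel : (U → ℝ) → Finset U)
    (hsel_indep : ∀ b, M.Indep (sel b))
    (hsel_max : ∀ b : U → ℝ, ∀ B, M.Indep B → ∑ i ∈ B, b i ≤ ∑ i ∈ sel b, b i)
    (b : U → ℝ) (i : U) {z : ℝ}
    (hwin : i ∈ sel (Function.update b i z)) : thr M b i ≤ z := by
  set b' := Function.update b i z with hb'
  obtain ⟨B1, hB1i, hB1ni, hB1e⟩ := exists_Wm M b i
  have h1 : Wm M b i ≤ ∑ j ∈ sel b', b' j := by
    rw [hB1e]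
    have he : ∑ j ∈ B1, b j = ∑ j ∈ B1, b' j := by
      refine Finset.sum_congr rfl (fun j hj => ?_)
      exact (Function.update_of_ne (ne_of_mem_of_not_mem hj hB1ni) _ _).symm
    rw [he]
    exact hsel_max b' B1 hB1i
  have h2 : ∑ j ∈ sel b', b' j = z + ∑ j ∈ (sel b').erase i, b j := by
    rw [← Finset.add_sum_erase _ b' hwin]
    congr 1
    · exact Function.update_self _ _ _
    · refine Finset.sum_congr rfl (fun j hj => ?_)
      exact Function.update_of_ne (Finset.ne_of_mem_erase hj) _ _
  have h3 : ∑ j ∈ (sel b').erase i, b j ≤ Cc M b i :=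
    Cc_ge (hsel_indep b') hwin
  rw [thr]
  linarith

end SmoothAux


namespace SmoothAux2

noncomputable def dev (v : ℝ) : Measure ℝ :=
  if 0 < v then
    (volume.restrict (Set.Ioc 0 ((1 - (Real.exp 1)⁻¹) * v))).withDensity
      (fun z => ((Real.toNNReal ((v - z)⁻¹) : ℝ≥0) : ℝ≥0∞))
  else Measure.dirac 0

theorem exp_pos1 : 0 < (Real.exp 1)⁻¹ := inv_pos.2 (Real.exp_pos 1)

theorem exp_lt1 : (Real.exp 1)⁻¹ < 1 := by
  rw [inv_lt_one_iff₀]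
  right
  exact Real.one_lt_exp_iff.2 one_pos

theorem c_pos {v : ℝ} (hv : 0 < v) : 0 < (1 - (Real.exp 1)⁻¹) * v :=
  mul_pos (by linarith [exp_lt1]) hv

theorem c_lt {v : ℝ} (hv : 0 < v) : (1 - (Real.exp 1)⁻¹) * v < v := by
  nlinarith [exp_pos1]

theorem sub_c {v : ℝ} : v - (1 - (Real.exp 1)⁻¹) * v = (Real.exp 1)⁻¹ * v := by ring

theorem integrableOn_density {v : ℝ} (hv : 0 < v) :
    IntegrableOn (fun z => (v - z)⁻¹) (Set.Ioc 0 ((1 - (Real.exp 1)⁻¹) * v)) volume := by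
  set c := (1 - (Real.exp 1)⁻¹) * v with hc
  have hcont : ContinuousOn (fun z => (v - z)⁻¹) (Set.Icc 0 c) := by
    apply ContinuousOn.inv₀
    · exact (continuous_const.sub continuous_id).continuousOn
    · intro z hz
      have := hz.2
      have := c_lt hv
      intro h
      rw [hc] at *
      linarith [sub_eq_zero.1 h]
  exact (hcont.integrableOn_Icc).mono_set Set.Ioc_subset_Icc_self

theorem dev_prob (v : ℝ) : IsProbabilityMeasure (dev v) := by
  rw [dev]
  split_ifs with hv
  · constructor
    set c := (1 - (Real.exp 1)⁻¹) * v with hc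
    rw [withDensity_apply _ MeasurableSet.univ, Measure.restrict_univ]
    have hnn : 0 ≤ᵐ[volume.restrict (Set.Ioc 0 c)] (fun z => (v - z)⁻¹) := by
      refine (ae_restrict_iff' measurableSet_Ioc).2 (Filter.Eventually.of_forall ?_)
      intro z hz
      exact inv_nonneg.2 (by linarith [hz.2, c_lt hv])
    have heq : ∀ z : ℝ, ((Real.toNNReal ((v - z)⁻¹) : ℝ≥0) : ℝ≥0∞) = ENNReal.ofReal ((v - z)⁻¹) :=
      fun z => rfl
    calc ∫⁻ z, ((Real.toNNReal ((v - z)⁻¹) : ℝ≥0) : ℝ≥0∞) ∂(volume.restrict (Set.Ioc 0 c))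
        = ∫⁻ z, ENNReal.ofReal ((v - z)⁻¹) ∂(volume.restrict (Set.Ioc 0 c)) := by
          simp_rw [heq]
      _ = ENNReal.ofReal (∫ z, (v - z)⁻¹ ∂(volume.restrict (Set.Ioc 0 c))) :=
          (ofReal_integral_eq_lintegral_ofReal (integrableOn_density hv) hnn).symm
      _ = 1 := by
        have h0c : (0:ℝ) ≤ c := le_of_lt (c_pos hv)
        have : ∫ z, (v - z)⁻¹ ∂(volume.restrict (Set.Ioc 0 c)) = ∫ z in (0:ℝ)..c, (v - z)⁻¹ :=
          (intervalIntegral.integral_of_le h0c).symm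
        rw [this]
        have h1 : ∫ z in (0:ℝ)..c, (v - z)⁻¹ = ∫ u in (v - c)..(v - 0), u⁻¹ :=
          intervalIntegral.integral_comp_sub_left (fun u => u⁻¹) v
        rw [h1]
        have hvc : (0:ℝ) < v - c := by rw [hc, sub_c]; positivity
        have h2 : (0:ℝ) ∉ Set.uIcc (v - c) (v - 0) := by
          rw [Set.mem_uIcc]
          push_neg
          constructor <;> intro h <;> [skip; skip] <;> linarith [hv]
        rw [integral_inv h2]
        have : (v - 0) / (v - c) = Real.exp 1 := by
          rw [sub_zero, hc, sub_c]
          field_simp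
        rw [this, Real.log_exp, ENNReal.ofReal_one]
  · infer_instance

end SmoothAux2

namespace SmoothAux2

theorem dev_nonneg_integral {v : ℝ} (hv : 0 ≤ v) (Win : Set ℝ) :
    0 ≤ ∫ z, Win.indicator (fun z => v - z) z ∂(dev v) := by
  classical
  rw [dev]
  split_ifs with hpos
  · set c := (1 - (Real.exp 1)⁻¹) * v with hc
    set μ := (volume.restrict (Set.Ioc 0 c)).withDensity
      (fun z => ((Real.toNNReal ((v - z)⁻¹) : ℝ≥0) : ℝ≥0∞)) with hμ
    apply integral_nonneg_of_ae
    have hnull : μ (Set.Ioc 0 c)ᶜ = 0 := by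
      rw [hμ, withDensity_apply _ measurableSet_Ioc.compl,
        Measure.restrict_restrict measurableSet_Ioc.compl, Set.compl_inter_self,
        Measure.restrict_empty, lintegral_zero_measure]
    have hsub : {z | ¬ 0 ≤ Win.indicator (fun z => v - z) z} ⊆ (Set.Ioc 0 c)ᶜ := by
      intro z hz hzc
      apply hz
      rw [Set.indicator_apply]
      split_ifs
      · linarith [hzc.2, c_lt hpos]
      · exact le_refl 0
    have hae : ∀ᵐ z ∂μ, 0 ≤ Win.indicator (fun z => v - z) z := by
      rw [ae_iff]
      exact measure_mono_null hsub hnull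
    filter_upwards [hae] with z hz using hz
  · rw [integral_dirac]
    rw [Set.indicator_apply]
    split_ifs
    · linarith
    · exact le_refl 0

theorem dev_key {v t : ℝ} (hv : 0 < v) (Win : Set ℝ)
    (hWin : Win = Set.Ioi t ∨ Win = Set.Ici t) :
    (1 - (Real.exp 1)⁻¹) * v - max t 0 ≤
      ∫ z, Win.indicator (fun z => v - z) z ∂(dev v) := by
  classical
  set c := (1 - (Real.exp 1)⁻¹) * v with hc
  set τ := max t 0 with hτ
  have hτ0 : 0 ≤ τ := le_max_right t 0
  have htτ : t ≤ τ := le_max_left t 0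
  rcases le_or_gt c τ with hcτ | hτc
  · exact le_trans (by linarith) (dev_nonneg_integral hv.le Win)
  · have hWinMeas : MeasurableSet Win := by
      rcases hWin with rfl | rfl
      exacts [measurableSet_Ioi, measurableSet_Ici]
    have hgmeas : Measurable (Win.indicator (fun z => v - z)) :=
      Measurable.indicator (measurable_const.sub measurable_id) hWinMeas
    rw [dev, if_pos hv]
    rw [integral_withDensity_eq_integral_smul
      (f := fun z => Real.toNNReal ((v - z)⁻¹))
      (Measurable.real_toNNReal ((measurable_const.sub measurable_id).inv))
      (Win.indicator (fun z => v - z))]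
    have hFeq : (fun z => (Real.toNNReal ((v - z)⁻¹) : ℝ≥0) •
        (Win.indicator (fun z => v - z) z)) =
        (fun z => max ((v - z)⁻¹) 0 * Win.indicator (fun z => v - z) z) := by
      funext z
      rw [NNReal.smul_def, Real.coe_toNNReal', smul_eq_mul]
    rw [hFeq]
    set F := fun z => max ((v - z)⁻¹) 0 * Win.indicator (fun z => v - z) z with hF
    set h := fun z => (Set.Ioc τ c).indicator (fun _ => (1:ℝ)) z with hh
    have hind : ∀ z ∈ Set.Ioc 0 c, 0 ≤ Win.indicator (fun z => v - z) z ∧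
        Win.indicator (fun z => v - z) z ≤ v - z := by
      intro z hz
      have h1 : 0 ≤ v - z := by linarith [hz.2, c_lt hv]
      rw [Set.indicator_apply]
      split_ifs
      · exact ⟨h1, le_refl _⟩
      · exact ⟨le_refl 0, h1⟩
    have hFmeas : Measurable F := by
      exact (((measurable_const.sub measurable_id).inv.max measurable_const).mul hgmeas)
    haveI : IsFiniteMeasure (volume.restrict (Set.Ioc 0 c)) := by
      constructor
      rw [Measure.restrict_apply_univ, Real.volume_Ioc]
      exact ENNReal.ofReal_lt_top
    have hFbound : ∀ z ∈ Set.Ioc 0 c, ‖F z‖ ≤ 1 := by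
      intro z hz
      obtain ⟨h1, h2⟩ := hind z hz
      have hvz : 0 < v - z := by linarith [hz.2, c_lt hv]
      have hFz : 0 ≤ F z := mul_nonneg (le_max_right _ _) h1
      rw [Real.norm_eq_abs, abs_of_nonneg hFz]
      simp only [hF]
      have hmax : max ((v - z)⁻¹) 0 = (v - z)⁻¹ := max_eq_left (inv_nonneg.2 hvz.le)
      rw [hmax]
      calc (v - z)⁻¹ * Win.indicator (fun z => v - z) z
          ≤ (v - z)⁻¹ * (v - z) := by
            exact mul_le_mul_of_nonneg_left h2 (inv_nonneg.2 hvz.le)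
        _ = 1 := inv_mul_cancel₀ (ne_of_gt hvz)
    have hFint : IntegrableOn F (Set.Ioc 0 c) volume := by
      refine Integrable.mono' (integrable_const 1) hFmeas.aestronglyMeasurable ?_
      exact (ae_restrict_iff' measurableSet_Ioc).2 (Filter.Eventually.of_forall hFbound)
    have hhint : IntegrableOn h (Set.Ioc 0 c) volume := by
      refine Integrable.mono' (integrable_const 1)
        ((measurable_const.indicator measurableSet_Ioc).aestronglyMeasurable) ?_
      refine (ae_restrict_iff' measurableSet_Ioc).2 (Filter.Eventually.of_forall ?_)
      intro z _
      simp only [hh]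
      rw [Set.indicator_apply]
      split_ifs <;> simp
    have hpt : ∀ z ∈ Set.Ioc 0 c, h z ≤ F z := by
      intro z hz
      by_cases hzτ : z ∈ Set.Ioc τ c
      · have hzw : z ∈ Win := by
          have : t < z := lt_of_le_of_lt htτ hzτ.1
          rcases hWin with rfl | rfl
          · exact this
          · exact le_of_lt this
        have hvz : 0 < v - z := by linarith [hz.2, c_lt hv]
        have hwz : Win.indicator (fun z => v - z) z = v - z := Set.indicator_of_mem hzw _
        simp only [hh, hF]
        rw [Set.indicator_of_mem hzτ, hwz,
          max_eq_left (inv_nonneg.2 hvz.le), inv_mul_cancel₀ (ne_of_gt hvz)]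
      · simp only [hh, hF]
        rw [Set.indicator_of_notMem hzτ]
        exact mul_nonneg (le_max_right _ _) (hind z hz).1
    have hmono := setIntegral_mono_on hhint hFint measurableSet_Ioc hpt
    have hval : ∫ z in Set.Ioc 0 c, h z = c - τ := by
      rw [hh]
      rw [setIntegral_indicator measurableSet_Ioc]
      rw [Set.inter_eq_self_of_subset_right (Set.Ioc_subset_Ioc hτ0 (le_refl c))]
      rw [setIntegral_const, Real.volume_real_Ioc_of_le (by linarith), smul_eq_mul,
        mul_one]
    calc (1 - (Real.exp 1)⁻¹) * v - τ = c - τ := by rw [hc]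
      _ = ∫ z in Set.Ioc 0 c, h z := hval.symm
      _ ≤ ∫ z in Set.Ioc 0 c, F z := hmono
      _ = ∫ z, F z ∂(volume.restrict (Set.Ioc 0 c)) := rfl

end SmoothAux2


/-- The winner-pays-bid matroid auction is `(1 − 1/e, 1)`-smooth with private
deviations: `sel b` is the independent set of winners selected on bid profile `b`
(maximizing the sum of the included bids, ties broken by some consistent rule);
winners pay their bids.  For every nonnegative valuation profile `v` there are bid
distributions `Dstar i (v i)` (depending only on `v i`) such that for every
nonnegative bid profile `b`,
`∑_i E_{b*_i∼Dstar}[u_i(b*_i, b_{−i})] ≥ (1−1/e)·∑_{i ∈ A*(v)} v_i − ∑_i p_i(b)`,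
where `A*(v)` is a maximum-weight independent set for weights `v`. -/
theorem matroid_auction_smooth {U : Type*} [DecidableEq U] [Fintype U]
    (M : FinMatroid U) (sel : (U → ℝ) → Finset U)
    (hsel_indep : ∀ b, M.Indep (sel b))
    (hsel_max : ∀ b : U → ℝ, ∀ B, M.Indep B → ∑ i ∈ B, b i ≤ ∑ i ∈ sel b, b i)
    (Astar : (U → ℝ) → Finset U)
    (hAstar_indep : ∀ v, M.Indep (Astar v))
    (hAstar_max : ∀ v : U → ℝ, ∀ B, M.Indep B → ∑ i ∈ B, v i ≤ ∑ i ∈ Astar v, v i) :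
    ∃ Dstar : U → ℝ → Measure ℝ,
      (∀ i vi, IsProbabilityMeasure (Dstar i vi)) ∧
      ∀ v b : U → ℝ, (∀ i, 0 ≤ v i) → (∀ i, 0 ≤ b i) →
        (1 - 1 / Real.exp 1) * (∑ i ∈ Astar v, v i)
            - (1 : ℝ) * (∑ i ∈ sel b, b i) ≤
          ∑ i : U, ∫ bs,
            (if i ∈ sel (Function.update b i bs) then v i - bs else 0)
              ∂(Dstar i (v i)) := by
  classical
  refine ⟨fun _ vi => SmoothAux2.dev vi, fun i vi => SmoothAux2.dev_prob vi, ?_⟩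
  intro v b hv hb
  have hmain : ∀ i : U,
      (if i ∈ Astar v then (1 - (Real.exp 1)⁻¹) * v i - max (SmoothAux.thr M b i) 0 else 0) ≤
      ∫ bs, (if i ∈ sel (Function.update b i bs) then v i - bs else 0)
        ∂(SmoothAux2.dev (v i)) := by
    intro i
    set Win : Set ℝ := {z | i ∈ sel (Function.update b i z)} with hWinDef
    have hint_eq : (fun bs => if i ∈ sel (Function.update b i bs) then v i - bs else 0)
        = fun bs => Win.indicator (fun z => v i - z) bs := by
      funext bs
      rw [Set.indicator_apply]
      exact if_congr Iff.rfl rfl rfl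
    rw [show (∫ bs, (if i ∈ sel (Function.update b i bs) then v i - bs else 0)
          ∂(SmoothAux2.dev (v i)))
        = ∫ bs, Win.indicator (fun z => v i - z) bs ∂(SmoothAux2.dev (v i)) from by
      rw [hint_eq]]
    by_cases hiA : i ∈ Astar v
    · rw [if_pos hiA]
      rcases (hv i).lt_or_eq with hpos | hzero
      · have hex : ∃ B, M.Indep B ∧ i ∈ B := ⟨Astar v, hAstar_indep v, hiA⟩
        set t := SmoothAux.thr M b i with htdef
        have hsub1 : Set.Ioi t ⊆ Win := fun z hz =>
          SmoothAux.win_of_thr_lt M sel hsel_indep hsel_max b i hex hz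
        have hsub2 : ∀ z ∈ Win, t ≤ z := fun z hz =>
          SmoothAux.thr_le_of_win M sel hsel_indep hsel_max b i hz
        have hWin : Win = Set.Ioi t ∨ Win = Set.Ici t := by
          by_cases ht : t ∈ Win
          · right
            ext z
            constructor
            · intro hz
              exact hsub2 z hz
            · intro hz
              rcases eq_or_lt_of_le (Set.mem_Ici.mp hz) with h | h
              · rw [← h]; exact ht
              · exact hsub1 h
          · left
            ext z
            constructor
            · intro hz
              rcases eq_or_lt_of_le (hsub2 z hz) with h | h
              · exact absurd (h ▸ hz) ht
              · exact h
            · intro hz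
              exact hsub1 hz
        exact SmoothAux2.dev_key hpos Win hWin
      · rw [SmoothAux2.dev, if_neg (not_lt.2 (le_of_eq hzero.symm))]
        rw [integral_dirac]
        rw [Set.indicator_apply]
        have h0 : 0 ≤ max (SmoothAux.thr M b i) 0 := le_max_right _ _
        split_ifs
        · rw [← hzero]; linarith
        · rw [← hzero]; linarith
    · rw [if_neg hiA]
      exact SmoothAux2.dev_nonneg_integral (hv i) Win
  have hsum := Finset.sum_le_sum (fun i (_ : i ∈ Finset.univ) => hmain i)
  refine le_trans ?_ hsum
  rw [Finset.sum_ite_mem, Finset.univ_inter]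
  have hthr := SmoothAux.sum_thr_le M sel hsel_indep hsel_max b hb (hAstar_indep v)
  have hsplit : ∑ i ∈ Astar v, ((1 - (Real.exp 1)⁻¹) * v i - max (SmoothAux.thr M b i) 0)
      = (1 - (Real.exp 1)⁻¹) * (∑ i ∈ Astar v, v i)
        - ∑ i ∈ Astar v, max (SmoothAux.thr M b i) 0 := by
    rw [Finset.sum_sub_distrib, Finset.mul_sum]
  rw [hsplit, one_div]
  linarith
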